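/- Let F be a cellular automaton of radius r, n ≥ r, and x a point. If z_1 = z_1^- w z_1^+ and z_2 = z_2^- w z_2^+ both belong to B_n(x), where w = x(-n,n), then every recombination z_{(i,j)} = z_i^- w z_j^+ with i,j ∈ {1,2} also belongs to B_n(x). -/
import Mathlib


open MeasureTheory Filter Set Topology

abbrev Config (A : Type*) := ℤ → A

def shift {A : Type*} (x : Config A) : Config A := fun i => x (i + 1)

def shiftZ {A : Type*} (m : ℤ) (x : Config A) : Config A := fun i => x (i + m)

def hasRadius {A : Type*} (F : Config A → Config A) (r : ℕ) : Prop :=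
  ∀ x y : Config A, ∀ i : ℤ, (∀ j : ℤ, |j - i| ≤ (r : ℤ) → x j = y j) → F x i = F y i

def cyl {A : Type*} (m : ℕ) (x : Config A) : Set (Config A) :=
  {y | ∀ i : ℤ, |i| ≤ (m : ℤ) → y i = x i}

def Bset {A : Type*} (F : Config A → Config A) (n : ℕ) (x : Config A) : Set (Config A) :=
  {y | ∀ k : ℕ, ∀ i : ℤ, |i| ≤ (n : ℤ) → F^[k] y i = F^[k] x i}

/-- Recombination: if z₁ and z₂ belong to B_n(x) then any point obtained by
gluing a left tail of one of them, the central word x(-n,n), and a right tail of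
one of them, also belongs to B_n(x). -/
theorem stmt2 {A : Type*} [Fintype A] (F : Config A → Config A) (r n : ℕ)
    (hF : hasRadius F r) (hn : r ≤ n) (x z₁ z₂ : Config A)
    (h1 : z₁ ∈ Bset F n x) (h2 : z₂ ∈ Bset F n x) :
    ∀ w : Config A,
      ((∀ i : ℤ, i < -(n : ℤ) → w i = z₁ i) ∨ (∀ i : ℤ, i < -(n : ℤ) → w i = z₂ i)) →
      ((∀ i : ℤ, (n : ℤ) < i → w i = z₁ i) ∨ (∀ i : ℤ, (n : ℤ) < i → w i = z₂ i)) →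
      (∀ i : ℤ, |i| ≤ (n : ℤ) → w i = x i) →
      w ∈ Bset F n x := by
  intro w hL hR hw
  obtain ⟨zL, hLmem, hLt⟩ : ∃ z, z ∈ Bset F n x ∧ ∀ i : ℤ, i < -(n : ℤ) → w i = z i := by
    rcases hL with h | h
    · exact ⟨z₁, h1, h⟩
    · exact ⟨z₂, h2, h⟩
  obtain ⟨zR, hRmem, hRt⟩ : ∃ z, z ∈ Bset F n x ∧ ∀ i : ℤ, (n : ℤ) < i → w i = z i := by
    rcases hR with h | h
    · exact ⟨z₁, h1, h⟩
    · exact ⟨z₂, h2, h⟩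
  have key : ∀ k : ℕ,
      (∀ i : ℤ, i < -(n : ℤ) → F^[k] w i = F^[k] zL i) ∧
      (∀ i : ℤ, |i| ≤ (n : ℤ) → F^[k] w i = F^[k] x i) ∧
      (∀ i : ℤ, (n : ℤ) < i → F^[k] w i = F^[k] zR i) := by
    intro k
    induction k with
    | zero =>
      exact ⟨fun i hi => hLt i hi, fun i hi => hw i hi, fun i hi => hRt i hi⟩
    | succ k ih =>
      obtain ⟨ihL, ihC, ihR⟩ := ih
      have hCL : ∀ j : ℤ, |j| ≤ (n : ℤ) → F^[k] w j = F^[k] zL j := fun j hj =>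
        (ihC j hj).trans (hLmem k j hj).symm
      have hCR : ∀ j : ℤ, |j| ≤ (n : ℤ) → F^[k] w j = F^[k] zR j := fun j hj =>
        (ihC j hj).trans (hRmem k j hj).symm
      refine ⟨?_, ?_, ?_⟩
      · intro i hi
        rw [Function.iterate_succ_apply', Function.iterate_succ_apply']
        apply hF
        intro j hj
        rw [abs_le] at hj
        rcases lt_or_ge j (-(n : ℤ)) with h | h
        · exact ihL j h
        · apply hCL; rw [abs_le]; omega
      · intro i hi
        rw [abs_le] at hi
        rcases le_or_gt i 0 with hi0 | hi0
        · have step : F^[k+1] w i = F^[k+1] zL i := by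
            rw [Function.iterate_succ_apply', Function.iterate_succ_apply']
            apply hF
            intro j hj
            rw [abs_le] at hj
            rcases lt_or_ge j (-(n : ℤ)) with h | h
            · exact ihL j h
            · apply hCL; rw [abs_le]; omega
          rw [step]
          exact hLmem (k+1) i (abs_le.mpr hi)
        · have step : F^[k+1] w i = F^[k+1] zR i := by
            rw [Function.iterate_succ_apply', Function.iterate_succ_apply']
            apply hF
            intro j hj
            rw [abs_le] at hj
            rcases le_or_gt j (n : ℤ) with h | h
            · apply hCR; rw [abs_le]; omega
            · exact ihR j h
          rw [step]
          exact hRmem (k+1) i (abs_le.mpr hi)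
      · intro i hi
        rw [Function.iterate_succ_apply', Function.iterate_succ_apply']
        apply hF
        intro j hj
        rw [abs_le] at hj
        rcases le_or_gt j (n : ℤ) with h | h
        · apply hCR; rw [abs_le]; omega
        · exact ihR j h
  intro k i hi
  exact (key k).2.1 i hi
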